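/- arXiv:2004.12517 — 6 statements merged into one kernel-verified Lean document; each statement's English description precedes it below -/
import Mathlib

section
/- Let P be a finite PIP. Define the cubical complex ⊞_P whose i-dimensional faces are pairs (I, M) where I is a consistent downset of P and M ⊆ max I with |M| = i. Then the f-polynomial of ⊞_P satisfies f(⊞_P, t) = f(Δ_P, 1+t), where Δ_P is the crossing complex of P. Equivalently, Σ_i f_i(⊞_P) t^i = Σ_j f_{j-1}(Δ_P) (1+t)^j, where f_i(⊞_P) counts pairs (I,M) with |M| = i and f_{j-1}(Δ_P) counts consistent antichains of cardinality j. -/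
open Finset

variable {P : Type*} [Fintype P] [DecidableEq P] [PartialOrder P]

/-- A subset is consistent if it contains no inconsistent pair. -/
def Consistent (incons : P → P → Prop) (S : Finset P) : Prop :=
  ∀ a ∈ S, ∀ b ∈ S, ¬ incons a b

/-- A downset (order ideal). -/
def IsDownset (I : Finset P) : Prop :=
  ∀ x ∈ I, ∀ y, y ≤ x → y ∈ I

open Classical in
/-- The maximal elements of a finite set. -/
noncomputable def maxElems (I : Finset P) : Finset P :=
  I.filter (fun x => ∀ y ∈ I, ¬ x < y)

open Classical in
/-- The downset generated by a set. -/
noncomputable def downGen (A : Finset P) : Finset P :=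
  Finset.univ.filter (fun x => ∃ a ∈ A, x ≤ a)

/-- A consistent antichain: the faces of the crossing complex `Δ_P`. -/
def ConsAntichain (incons : P → P → Prop) (A : Finset P) : Prop :=
  (∀ a ∈ A, ∀ b ∈ A, a ≠ b → ¬ a ≤ b) ∧ Consistent incons A

/-- A face of the cubical complex `⊞_P`: a pair (I, M) with I a consistent
downset and M ⊆ max I. -/
def IsFace (incons : P → P → Prop) (I M : Finset P) : Prop :=
  IsDownset I ∧ Consistent incons I ∧ M ⊆ maxElems I

/-- The face-containment order on faces of `⊞_P`:
`C(I',M') ⊆ C(I,M)` iff `M' ⊆ M` and `I \ M ⊆ I' ⊆ I`. -/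
def FaceLE (p q : Finset P × Finset P) : Prop :=
  p.2 ⊆ q.2 ∧ q.1 \ q.2 ⊆ p.1 ∧ p.1 ⊆ q.1

open Classical in
/-- `f_i(⊞_P)`: the number of `i`-dimensional faces `C(I,M)` of the cubical
complex `⊞_P`, i.e. pairs `(I, M)` with `I` a consistent downset, `M ⊆ max I`
and `|M| = i`. -/
noncomputable def cubeFaceCount (incons : P → P → Prop) (i : ℕ) : ℕ :=
  (Finset.univ.filter (fun p : Finset P × Finset P =>
    IsDownset p.1 ∧ Consistent incons p.1 ∧ p.2 ⊆ maxElems p.1 ∧ p.2.card = i)).card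

open Classical in
/-- `f_{j-1}(Δ_P)`: the number of consistent antichains of cardinality `j`. -/
noncomputable def antichainCount (incons : P → P → Prop) (j : ℕ) : ℕ :=
  (Finset.univ.filter (fun A : Finset P => ConsAntichain incons A ∧ A.card = j)).card

section Aux
variable {P : Type*} [Fintype P] [DecidableEq P] [PartialOrder P]
open Classical

lemma mem_downGen' {A : Finset P} {x : P} : x ∈ downGen A ↔ ∃ a ∈ A, x ≤ a := by
  simp [downGen]

lemma mem_maxElems' {I : Finset P} {x : P} :
    x ∈ maxElems I ↔ x ∈ I ∧ ∀ y ∈ I, ¬ x < y := by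
  simp [maxElems]

lemma downGen_maxElems {I : Finset P} (hI : IsDownset I) : downGen (maxElems I) = I := by
  ext x
  rw [mem_downGen']
  constructor
  · rintro ⟨a, ha, hxa⟩
    exact hI a (mem_maxElems'.1 ha).1 x hxa
  · intro hx
    obtain ⟨m, hm, hmax⟩ : ∃ m ∈ I.filter (fun y => x ≤ y), ∀ y ∈ I.filter (fun y => x ≤ y), ¬ m < y := by
      obtain ⟨m, hm⟩ := Finset.exists_maximal (s := I.filter (fun y => x ≤ y)) ⟨x, by simp [hx]⟩
      exact ⟨m, hm.1, fun y hy hlt => absurd (hm.2 hy hlt.le) (not_le_of_gt hlt)⟩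
    simp only [Finset.mem_filter] at hm
    refine ⟨m, mem_maxElems'.2 ⟨hm.1, fun y hy hlt => hmax y ?_ hlt⟩, hm.2⟩
    exact Finset.mem_filter.2 ⟨hy, hm.2.trans hlt.le⟩

lemma maxElems_downGen {A : Finset P} (hA : ∀ a ∈ A, ∀ b ∈ A, a ≠ b → ¬ a ≤ b) :
    maxElems (downGen A) = A := by
  ext x
  rw [mem_maxElems']
  constructor
  · rintro ⟨hx, hmax⟩
    obtain ⟨a, ha, hxa⟩ := mem_downGen'.1 hx
    rcases eq_or_lt_of_le hxa with rfl | hlt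
    · exact ha
    · exact absurd hlt (hmax a (mem_downGen'.2 ⟨a, ha, le_refl a⟩))
  · intro hx
    refine ⟨mem_downGen'.2 ⟨x, hx, le_refl x⟩, fun y hy hlt => ?_⟩
    obtain ⟨b, hb, hyb⟩ := mem_downGen'.1 hy
    exact hA x hx b hb (fun h => absurd (h ▸ (hlt.trans_le hyb)) (lt_irrefl x))
      (hlt.le.trans hyb)

lemma isDownset_downGen (A : Finset P) : IsDownset (downGen A) := by
  intro x hx y hyx
  obtain ⟨a, ha, hxa⟩ := mem_downGen'.1 hx
  exact mem_downGen'.2 ⟨a, ha, hyx.trans hxa⟩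

end Aux

/-- `f(⊞_P, t) = f(Δ_P, 1 + t)`. -/
theorem f_polynomial_cubical_eq_crossing (incons : P → P → Prop)
    (hirr : ∀ a, ¬ incons a a)
    (hsymm : ∀ a b, incons a b → incons b a)
    (hup : ∀ a b a' b', incons a b → a ≤ a' → b ≤ b' → incons a' b') :
    ∀ t : ℤ,
      ∑ i ∈ Finset.range (Fintype.card P + 1), (cubeFaceCount incons i : ℤ) * t ^ i =
      ∑ j ∈ Finset.range (Fintype.card P + 1), (antichainCount incons j : ℤ) * (1 + t) ^ j := by
  classical
  intro t
  set S : Finset (Finset P × Finset P) := Finset.univ.filter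
    (fun p : Finset P × Finset P =>
      IsDownset p.1 ∧ Consistent incons p.1 ∧ p.2 ⊆ maxElems p.1) with hSdef
  set T : Finset (Finset P) := Finset.univ.filter (fun A => ConsAntichain incons A) with hTdef
  have hL : ∑ i ∈ Finset.range (Fintype.card P + 1), (cubeFaceCount incons i : ℤ) * t ^ i
      = ∑ p ∈ S, t ^ p.2.card := by
    rw [← Finset.sum_fiberwise_of_maps_to (g := fun p : Finset P × Finset P => p.2.card)
      (t := Finset.range (Fintype.card P + 1))
      (fun p _ => Finset.mem_range.2 (Nat.lt_succ_of_le (p.2.card_le_univ)))]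
    refine Finset.sum_congr rfl fun i _ => ?_
    have hfib : S.filter (fun p => p.2.card = i)
        = Finset.univ.filter (fun p : Finset P × Finset P =>
            IsDownset p.1 ∧ Consistent incons p.1 ∧ p.2 ⊆ maxElems p.1 ∧ p.2.card = i) := by
      rw [hSdef, Finset.filter_filter]
      exact Finset.filter_congr (fun p _ => by tauto)
    have hconst : ∑ p ∈ S.filter (fun p => p.2.card = i), t ^ p.2.card
        = (S.filter (fun p => p.2.card = i)).card • t ^ i := by
      rw [← Finset.sum_const]
      exact Finset.sum_congr rfl (fun p hp => by rw [(Finset.mem_filter.1 hp).2])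
    rw [hconst, nsmul_eq_mul, hfib, cubeFaceCount]
  have hR : ∑ j ∈ Finset.range (Fintype.card P + 1), (antichainCount incons j : ℤ) * (1 + t) ^ j
      = ∑ A ∈ T, (1 + t) ^ A.card := by
    rw [← Finset.sum_fiberwise_of_maps_to (g := fun A : Finset P => A.card)
      (t := Finset.range (Fintype.card P + 1))
      (fun A _ => Finset.mem_range.2 (Nat.lt_succ_of_le (A.card_le_univ)))]
    refine Finset.sum_congr rfl fun j _ => ?_
    have hfib : T.filter (fun A => A.card = j)
        = Finset.univ.filter (fun A : Finset P => ConsAntichain incons A ∧ A.card = j) := by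
      rw [hTdef, Finset.filter_filter]
    have hconst : ∑ A ∈ T.filter (fun A => A.card = j), (1 + t) ^ A.card
        = (T.filter (fun A => A.card = j)).card • (1 + t) ^ j := by
      rw [← Finset.sum_const]
      exact Finset.sum_congr rfl (fun A hA => by rw [(Finset.mem_filter.1 hA).2])
    rw [hconst, nsmul_eq_mul, hfib, antichainCount]
  rw [hL, hR]
  have hpow : ∀ A : Finset P, (1 + t) ^ A.card = ∑ M ∈ A.powerset, t ^ M.card := by
    intro A
    have := Finset.prod_add (fun _ : P => t) (fun _ : P => (1 : ℤ)) A
    simp only [Finset.prod_const, one_pow, mul_one] at this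
    rw [add_comm 1 t]
    exact this
  rw [Finset.sum_congr rfl (fun A _ => hpow A), ← Finset.sum_sigma T
    (fun A => A.powerset) (fun x => t ^ x.2.card)]
  refine Finset.sum_nbij' (fun p : Finset P × Finset P => (⟨maxElems p.1, p.2⟩ :
      Σ _A : Finset P, Finset P)) (fun x => (downGen x.1, x.2)) ?_ ?_ ?_ ?_ ?_
  · rintro ⟨I, M⟩ hp
    simp only [hSdef, Finset.mem_filter, Finset.mem_univ, true_and] at hp
    obtain ⟨hdown, hcons, hsub⟩ := hp
    refine Finset.mem_sigma.2 ⟨?_, Finset.mem_powerset.2 hsub⟩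
    simp only [hTdef, Finset.mem_filter, Finset.mem_univ, true_and]
    constructor
    · intro a ha b hb hne hle
      have ha' := mem_maxElems'.1 ha
      exact ha'.2 b (mem_maxElems'.1 hb).1 (lt_of_le_of_ne hle hne)
    · intro a ha b hb
      exact hcons a (mem_maxElems'.1 ha).1 b (mem_maxElems'.1 hb).1
  · rintro ⟨A, M⟩ hx
    rw [Finset.mem_sigma] at hx
    obtain ⟨hA, hM⟩ := hx
    simp only [hTdef, Finset.mem_filter, Finset.mem_univ, true_and] at hA
    obtain ⟨hanti, hcons⟩ := hA
    simp only [hSdef, Finset.mem_filter, Finset.mem_univ, true_and]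
    refine ⟨isDownset_downGen A, ?_, ?_⟩
    · intro x hxm y hym h
      obtain ⟨a, ha, hxa⟩ := mem_downGen'.1 hxm
      obtain ⟨b, hb, hyb⟩ := mem_downGen'.1 hym
      exact hcons a ha b hb (hup x y a b h hxa hyb)
    · rw [maxElems_downGen hanti]
      exact Finset.mem_powerset.1 hM
  · rintro ⟨I, M⟩ hp
    simp only [hSdef, Finset.mem_filter, Finset.mem_univ, true_and] at hp
    simp [downGen_maxElems hp.1]
  · rintro ⟨A, M⟩ hx
    rw [Finset.mem_sigma] at hx
    simp only [hTdef, Finset.mem_filter, Finset.mem_univ, true_and] at hx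
    simp [maxElems_downGen hx.1.1]
  · rintro ⟨I, M⟩ _
    rfl
end

section
/- Let P be a finite PIP and define the alternating sum χ = Σ_{i≥0} (-1)^i f_i(⊞_P), where f_i(⊞_P) is the number of pairs (I, M) with I a consistent downset and M ⊆ max I of size i. Then χ = 1. -/
open Finset

variable {P : Type*} [Fintype P] [DecidableEq P] [PartialOrder P]

/-- The Euler characteristic of `⊞_P` is `1`. -/
theorem euler_characteristic_cubical (incons : P → P → Prop)
    (hirr : ∀ a, ¬ incons a a)
    (hsymm : ∀ a b, incons a b → incons b a)
    (hup : ∀ a b a' b', incons a b → a ≤ a' → b ≤ b' → incons a' b') :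
    ∑ i ∈ Finset.range (Fintype.card P + 1),
        (-1 : ℤ) ^ i * (cubeFaceCount incons i : ℤ) = 1 := by
  classical
  set S : Finset (Finset P × Finset P) :=
    Finset.univ.filter (fun p : Finset P × Finset P =>
      IsDownset p.1 ∧ Consistent incons p.1 ∧ p.2 ⊆ maxElems p.1) with hS
  have hmem : ∀ p : Finset P × Finset P, p ∈ S ↔
      IsDownset p.1 ∧ Consistent incons p.1 ∧ p.2 ⊆ maxElems p.1 := by
    intro p; simp [hS]
  have hmaps : ∀ p ∈ S, p.2.card ∈ Finset.range (Fintype.card P + 1) := by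
    intro p _
    simp only [Finset.mem_range, Nat.lt_succ_iff]
    exact le_trans (Finset.card_le_card (Finset.subset_univ _)) (le_of_eq (Finset.card_univ))
  have h1 : ∑ i ∈ Finset.range (Fintype.card P + 1),
        (-1 : ℤ) ^ i * (cubeFaceCount incons i : ℤ)
      = ∑ p ∈ S, (-1 : ℤ) ^ p.2.card := by
    rw [← Finset.sum_fiberwise_of_maps_to hmaps (fun p => (-1 : ℤ) ^ p.2.card)]
    refine Finset.sum_congr rfl fun i _ => ?_
    rw [Finset.sum_congr rfl (fun p hp => by
      rw [(Finset.mem_filter.mp hp).2]), Finset.sum_const, nsmul_eq_mul, mul_comm]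
    congr 1
    unfold cubeFaceCount
    norm_cast
    congr 1
    ext p
    simp only [Finset.mem_filter, Finset.mem_univ, true_and, hS]
    tauto
  rw [h1]
  set D : Finset (Finset P) :=
    Finset.univ.filter (fun I => IsDownset I ∧ Consistent incons I) with hD
  have h2 : ∑ p ∈ S, (-1 : ℤ) ^ p.2.card
      = ∑ I ∈ D, ∑ M ∈ (maxElems I).powerset, (-1 : ℤ) ^ M.card := by
    refine Finset.sum_finset_product S D (fun I => (maxElems I).powerset) ?_
    intro p
    simp only [hmem, hD, Finset.mem_filter, Finset.mem_univ, true_and,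
      Finset.mem_powerset]
    tauto
  rw [h2]
  have h3 : ∀ I ∈ D, ∑ M ∈ (maxElems I).powerset, (-1 : ℤ) ^ M.card
      = if I = ∅ then 1 else 0 := by
    intro I hI
    rw [Finset.sum_powerset_neg_one_pow_card]
    congr 1
    simp only [eq_iff_iff]
    constructor
    · intro h
      by_contra hne
      obtain ⟨m, hm, hmax0⟩ := Finset.exists_maximal (Finset.nonempty_iff_ne_empty.mpr hne)
      have hmax : ∀ y ∈ I, ¬ m < y := fun y hy hlt =>
        lt_irrefl m (lt_of_lt_of_le hlt (hmax0 hy hlt.le))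
      have : m ∈ maxElems I := by
        simp only [maxElems, Finset.mem_filter]
        exact ⟨hm, hmax⟩
      rw [h] at this
      exact absurd this (Finset.notMem_empty m)
    · intro h
      subst h
      simp [maxElems]
  have hempty : (∅ : Finset P) ∈ D := by
    rw [hD, Finset.mem_filter]
    simp [IsDownset, Consistent]
  rw [Finset.sum_congr rfl h3, Finset.sum_ite_eq' D ∅ (fun _ => 1), if_pos hempty]
end

section
/- Let P be a finite PIP and let C(I,M) denote the face of ⊞_P given by {I \ N : N ⊆ M}, for I a consistent downset and M ⊆ max I. Then C(I',M') ⊆ C(I,M) (i.e., {I' \ N' : N' ⊆ M'} ⊆ {I \ N : N ⊆ M}) if and only if M' ⊆ M and I \ M ⊆ I' ⊆ I. -/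
open Finset

variable {P : Type*} [Fintype P] [DecidableEq P] [PartialOrder P]

/-- `C(I',M') ⊆ C(I,M)` (as sets of vertices `{I \ N : N ⊆ M}`) if and only
if `M' ⊆ M` and `I \ M ⊆ I' ⊆ I`. -/
theorem face_subset_iff (incons : P → P → Prop)
    (hirr : ∀ a, ¬ incons a a)
    (hsymm : ∀ a b, incons a b → incons b a)
    (hup : ∀ a b a' b', incons a b → a ≤ a' → b ≤ b' → incons a' b')
    (I M I' M' : Finset P)
    (hF : IsFace incons I M) (hF' : IsFace incons I' M') :
    (∀ N' ⊆ M', ∃ N ⊆ M, I' \ N' = I \ N) ↔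
      (M' ⊆ M ∧ I \ M ⊆ I' ∧ I' ⊆ I) := by
  classical
  constructor
  · intro h
    obtain ⟨N₀, hN₀M, hN₀⟩ := h ∅ (empty_subset _)
    rw [sdiff_empty] at hN₀
    obtain ⟨N₁, hN₁M, hN₁⟩ := h M' (subset_refl _)
    have hI'I : I' ⊆ I := by rw [hN₀]; exact sdiff_subset
    have hM'I' : M' ⊆ I' := hF'.2.2.trans (fun x hx => (mem_filter.mp hx).1)
    refine ⟨?_, ?_, hI'I⟩
    · intro m hm
      have hmI' : m ∈ I' := hM'I' hm
      have hnot : m ∉ I' \ M' := by simp [hm]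
      rw [hN₁] at hnot
      have hmI : m ∈ I := hI'I hmI'
      have : m ∈ N₁ := by by_contra hc; exact hnot (mem_sdiff.mpr ⟨hmI, hc⟩)
      exact hN₁M this
    · rw [hN₀]; exact sdiff_subset_sdiff (subset_refl _) hN₀M
  · rintro ⟨hM'M, hIMI', hI'I⟩ N' hN'
    refine ⟨N' ∪ (I \ I'), ?_, ?_⟩
    · intro x hx
      rcases mem_union.mp hx with h | h
      · exact hM'M (hN' h)
      · rcases mem_sdiff.mp h with ⟨hxI, hxI'⟩
        by_contra hxM
        exact hxI' (hIMI' (mem_sdiff.mpr ⟨hxI, hxM⟩))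
    · ext x; simp only [mem_sdiff, mem_union]
      constructor
      · rintro ⟨hxI', hxN'⟩
        exact ⟨hI'I hxI', fun h => h.elim hxN' (fun h2 => h2.2 hxI')⟩
      · rintro ⟨hxI, h⟩
        push_neg at h
        exact ⟨h.2 hxI, h.1⟩
end

section
/- Let P be a finite PIP, and let C(I_1,M_1), C(I_2,M_2) be faces of ⊞_P. These faces have a meet (a largest common subface) if and only if (I_1 \ M_1) ∪ (I_2 \ M_2) ⊆ I_1 ∩ I_2, in which case the meet is C(I_1 ∩ I_2, M_1 ∩ M_2). -/
open Finset

variable {P : Type*} [Fintype P] [DecidableEq P] [PartialOrder P]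

/-- Two faces `C(I₁,M₁)` and `C(I₂,M₂)` of `⊞_P` have a meet iff
`(I₁ \ M₁) ∪ (I₂ \ M₂) ⊆ I₁ ∩ I₂`, in which case the meet is
`C(I₁ ∩ I₂, M₁ ∩ M₂)`. -/
theorem face_meet (incons : P → P → Prop)
    (hirr : ∀ a, ¬ incons a a)
    (hsymm : ∀ a b, incons a b → incons b a)
    (hup : ∀ a b a' b', incons a b → a ≤ a' → b ≤ b' → incons a' b')
    (I₁ M₁ I₂ M₂ : Finset P)
    (h₁ : IsFace incons I₁ M₁) (h₂ : IsFace incons I₂ M₂) :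
    ((∃ J N : Finset P, IsFace incons J N ∧
        FaceLE (J, N) (I₁, M₁) ∧ FaceLE (J, N) (I₂, M₂) ∧
        ∀ J' N' : Finset P, IsFace incons J' N' →
          FaceLE (J', N') (I₁, M₁) → FaceLE (J', N') (I₂, M₂) →
          FaceLE (J', N') (J, N)) ↔
      (I₁ \ M₁) ∪ (I₂ \ M₂) ⊆ I₁ ∩ I₂) ∧
    ((I₁ \ M₁) ∪ (I₂ \ M₂) ⊆ I₁ ∩ I₂ →
      IsFace incons (I₁ ∩ I₂) (M₁ ∩ M₂) ∧
      FaceLE (I₁ ∩ I₂, M₁ ∩ M₂) (I₁, M₁) ∧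
      FaceLE (I₁ ∩ I₂, M₁ ∩ M₂) (I₂, M₂) ∧
      ∀ J' N' : Finset P, IsFace incons J' N' →
        FaceLE (J', N') (I₁, M₁) → FaceLE (J', N') (I₂, M₂) →
        FaceLE (J', N') (I₁ ∩ I₂, M₁ ∩ M₂)) := by
  have key : (I₁ \ M₁) ∪ (I₂ \ M₂) ⊆ I₁ ∩ I₂ →
      IsFace incons (I₁ ∩ I₂) (M₁ ∩ M₂) ∧
      FaceLE (I₁ ∩ I₂, M₁ ∩ M₂) (I₁, M₁) ∧
      FaceLE (I₁ ∩ I₂, M₁ ∩ M₂) (I₂, M₂) ∧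
      ∀ J' N' : Finset P, IsFace incons J' N' →
        FaceLE (J', N') (I₁, M₁) → FaceLE (J', N') (I₂, M₂) →
        FaceLE (J', N') (I₁ ∩ I₂, M₁ ∩ M₂) := by
    intro hsub
    obtain ⟨hd₁, hc₁, hm₁⟩ := h₁
    obtain ⟨hd₂, hc₂, hm₂⟩ := h₂
    refine ⟨⟨?_, ?_, ?_⟩, ?_, ?_, ?_⟩
    · intro x hx y hy
      rw [Finset.mem_inter] at hx ⊢
      exact ⟨hd₁ x hx.1 y hy, hd₂ x hx.2 y hy⟩
    · intro a ha b hb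
      rw [Finset.mem_inter] at ha hb
      exact hc₁ a ha.1 b hb.1
    · intro x hx
      rw [Finset.mem_inter] at hx
      have h1 := hm₁ hx.1
      have h2 := hm₂ hx.2
      simp only [maxElems, Finset.mem_filter] at h1 h2 ⊢
      exact ⟨Finset.mem_inter.2 ⟨h1.1, h2.1⟩,
        fun y hy => h1.2 y (Finset.mem_inter.1 hy).1⟩
    · exact ⟨Finset.inter_subset_left,
        fun x hx => hsub (Finset.mem_union_left _ hx), Finset.inter_subset_left⟩
    · exact ⟨Finset.inter_subset_right,
        fun x hx => hsub (Finset.mem_union_right _ hx), Finset.inter_subset_right⟩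
    · rintro J' N' _ ⟨hN1, hI1, hJ1⟩ ⟨hN2, hI2, hJ2⟩
      refine ⟨fun x hx => Finset.mem_inter.2 ⟨hN1 hx, hN2 hx⟩, ?_,
        fun x hx => Finset.mem_inter.2 ⟨hJ1 hx, hJ2 hx⟩⟩
      intro x hx
      rw [Finset.mem_sdiff, Finset.mem_inter, Finset.mem_inter] at hx
      obtain ⟨⟨hx1, hx2⟩, hx3⟩ := hx
      by_cases hm : x ∈ M₁
      · have : x ∉ M₂ := fun h => hx3 ⟨hm, h⟩
        exact hI2 (Finset.mem_sdiff.2 ⟨hx2, this⟩)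
      · exact hI1 (Finset.mem_sdiff.2 ⟨hx1, hm⟩)
  refine ⟨⟨?_, fun hsub => ?_⟩, key⟩
  · rintro ⟨J, N, _, ⟨_, hI1, hJ1⟩, ⟨_, hI2, hJ2⟩, _⟩
    intro x hx
    rcases Finset.mem_union.1 hx with h | h
    · exact Finset.mem_inter.2 ⟨hJ1 (hI1 h), hJ2 (hI1 h)⟩
    · exact Finset.mem_inter.2 ⟨hJ1 (hI2 h), hJ2 (hI2 h)⟩
  · obtain ⟨hf, hl1, hl2, huniv⟩ := key hsub
    exact ⟨I₁ ∩ I₂, M₁ ∩ M₂, hf, hl1, hl2, huniv⟩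
end

section
/- Let P be a finite PIP and J a consistent downset of P. The faces C(I,M) of ⊞_P containing the vertex J (i.e., such that J = I \ X for some X ⊆ M) are in bijection with pairs (X, Y) such that X ⊔ Y is a consistent antichain of P, Y ⊆ max J, and X ⊆ min{x ∈ P \ J : x is consistent with every j ∈ J}. In particular, for J = ∅, the faces containing the root vertex correspond to consistent antichains contained in min P. -/
open Finset

variable {P : Type*} [Fintype P] [DecidableEq P] [PartialOrder P]

open Classical in
/-- The elements of `P \ J` consistent with all of `J`. -/
noncomputable def linkCandidates (incons : P → P → Prop) (J : Finset P) : Finset P :=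
  Finset.univ.filter (fun x => x ∉ J ∧ ∀ j ∈ J, ¬ incons x j)

open Classical in
/-- The minimal elements of a finite set. -/
noncomputable def minElems (S : Finset P) : Finset P :=
  S.filter (fun x => ∀ y ∈ S, ¬ y < x)

/-- Description of the link of a vertex of `⊞_P`: the faces `C(I,M)`
containing the vertex corresponding to the consistent downset `J` are in
bijection with pairs `(X, Y)` such that `X ⊔ Y` is a consistent antichain,
`Y ⊆ max J`, and `X ⊆ min { x ∈ P \ J : x consistent with all of J }`. -/
theorem faces_containing_vertex (incons : P → P → Prop)
    (hirr : ∀ a, ¬ incons a a)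
    (hsymm : ∀ a b, incons a b → incons b a)
    (hup : ∀ a b a' b', incons a b → a ≤ a' → b ≤ b' → incons a' b')
    (J : Finset P) (hJ : IsDownset J) (hJc : Consistent incons J) :
    ∀ I M : Finset P,
      (IsFace incons I M ∧ ∃ X ⊆ M, J = I \ X) ↔
      (∃ X Y : Finset P,
        Disjoint X Y ∧
        ConsAntichain incons (X ∪ Y) ∧
        Y ⊆ maxElems J ∧
        X ⊆ minElems (linkCandidates incons J) ∧
        I = J ∪ X ∧ M = X ∪ Y) := by
  intro I M
  constructor
  · rintro ⟨⟨hI_down, hI_cons, hM⟩, X, hXM, hJIX⟩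
    have hMI : M ⊆ I := by
      intro m hm
      have h := hM hm
      simp only [maxElems, Finset.mem_filter] at h
      exact h.1
    have hMmax : ∀ m ∈ M, ∀ z ∈ I, ¬ m < z := by
      intro m hm
      have := hM hm
      simp only [maxElems, Finset.mem_filter] at this
      exact this.2
    have hXI : X ⊆ I := hXM.trans hMI
    refine ⟨X, M \ X, Finset.disjoint_sdiff, ?_, ?_, ?_, ?_, ?_⟩
    · rw [Finset.union_sdiff_of_subset hXM]
      constructor
      · intro a ha b hb hne hle
        exact hMmax a ha b (hMI hb) (lt_of_le_of_ne hle hne)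
      · intro a ha b hb
        exact hI_cons a (hMI ha) b (hMI hb)
    · intro y hy
      rw [Finset.mem_sdiff] at hy
      have hyJ : y ∈ J := by
        rw [hJIX, Finset.mem_sdiff]
        exact ⟨hMI hy.1, hy.2⟩
      simp only [maxElems, Finset.mem_filter]
      refine ⟨hyJ, fun z hz => ?_⟩
      have hzI : z ∈ I := by
        rw [hJIX, Finset.mem_sdiff] at hz; exact hz.1
      exact hMmax y hy.1 z hzI
    · intro x hx
      have hxI : x ∈ I := hXI hx
      have hxJ : x ∉ J := by
        rw [hJIX, Finset.mem_sdiff]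
        intro h; exact h.2 hx
      simp only [minElems, Finset.mem_filter]
      constructor
      · simp only [linkCandidates, Finset.mem_filter]
        refine ⟨Finset.mem_univ _, hxJ, fun j hj => ?_⟩
        have hjI : j ∈ I := by
          rw [hJIX, Finset.mem_sdiff] at hj; exact hj.1
        exact hI_cons x hxI j hjI
      · intro y hy hlt
        simp only [linkCandidates, Finset.mem_filter] at hy
        have hyI : y ∈ I := hI_down x hxI y (le_of_lt hlt)
        have hyX : y ∈ X := by
          by_contra hyX
          exact hy.2.1 (by rw [hJIX, Finset.mem_sdiff]; exact ⟨hyI, hyX⟩)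
        exact hMmax y (hXM hyX) x hxI hlt
    · rw [hJIX, Finset.sdiff_union_of_subset hXI]
    · rw [Finset.union_sdiff_of_subset hXM]
  · rintro ⟨X, Y, hdisj, ⟨hanti, hcons⟩, hY, hX, rfl, rfl⟩
    have hXlink : ∀ x ∈ X, x ∉ J ∧ ∀ j ∈ J, ¬ incons x j := by
      intro x hx
      have h := hX hx
      simp only [minElems, Finset.mem_filter] at h
      simp only [linkCandidates, Finset.mem_filter] at h
      exact h.1.2
    have hXmin : ∀ x ∈ X, ∀ y, y ∉ J → (∀ j ∈ J, ¬ incons y j) → ¬ y < x := by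
      intro x hx y hyJ hycons
      have h := hX hx
      simp only [minElems, Finset.mem_filter] at h
      refine h.2 y ?_
      simp only [linkCandidates, Finset.mem_filter]
      exact ⟨Finset.mem_univ _, hyJ, hycons⟩
    have hYJ : Y ⊆ J := by
      intro y hy
      have h := hY hy
      simp only [maxElems, Finset.mem_filter] at h
      exact h.1
    have hYmax : ∀ y ∈ Y, ∀ z ∈ J, ¬ y < z := by
      intro y hy
      have := hY hy
      simp only [maxElems, Finset.mem_filter] at this
      exact this.2
    have hdown : IsDownset (J ∪ X) := by
      intro z hz y hle
      rw [Finset.mem_union] at hz ⊢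
      rcases hz with hz | hz
      · exact Or.inl (hJ z hz y hle)
      · rcases eq_or_lt_of_le hle with rfl | hlt
        · exact Or.inr hz
        · left
          by_contra hyJ
          refine hXmin z hz y hyJ (fun j hj hinc => ?_) hlt
          exact (hXlink z hz).2 j hj (hup y j z j hinc (le_of_lt hlt) le_rfl)
    refine ⟨⟨hdown, ?_, ?_⟩, X, Finset.subset_union_left, ?_⟩
    · intro a ha b hb
      rw [Finset.mem_union] at ha hb
      rcases ha with ha | ha <;> rcases hb with hb | hb
      · exact hJc a ha b hb
      · intro h; exact (hXlink b hb).2 a ha (hsymm a b h)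
      · exact (hXlink a ha).2 b hb
      · exact hcons a (Finset.mem_union_left _ ha) b (Finset.mem_union_left _ hb)
    · intro m hm
      simp only [maxElems, Finset.mem_filter]
      rw [Finset.mem_union] at hm
      rcases hm with hm | hm
      · refine ⟨Finset.mem_union_right _ hm, fun z hz hlt => ?_⟩
        rw [Finset.mem_union] at hz
        rcases hz with hz | hz
        · exact (hXlink m hm).1 (hJ z hz m (le_of_lt hlt))
        · exact hanti m (Finset.mem_union_left _ hm) z (Finset.mem_union_left _ hz)
            (ne_of_lt hlt) (le_of_lt hlt)
      · refine ⟨Finset.mem_union_left _ (hYJ hm), fun z hz hlt => ?_⟩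
        rw [Finset.mem_union] at hz
        rcases hz with hz | hz
        · exact hYmax m hm z hz hlt
        · exact hanti m (Finset.mem_union_right _ hm) z (Finset.mem_union_left _ hz)
            (ne_of_lt hlt) (le_of_lt hlt)
    · have hdJX : Disjoint J X :=
        Finset.disjoint_left.mpr (fun a ha hax => (hXlink a hax).1 ha)
      rw [Finset.union_sdiff_right]
      exact (Finset.sdiff_eq_self_of_disjoint hdJX).symm
end

section
/- Let P be a finite PIP whose crossing complex Δ_P admits a proper r-colouring κ: P → {1,…,r} (meaning κ assigns different colours to any two distinct elements that are consistent and incomparable). Define κ_c mapping each consistent downset I to the vector w ∈ {0,1}^r with w_j = (number of elements of I of colour j) mod 2. Then for any face C(I,M) of ⊞_P, the restriction of κ_c to the vertex set {I \ N : N ⊆ M} is injective, and its image is a face of the cube {0,1}^r, namely the set of vectors agreeing with κ_c(I \ M) in all coordinates j not in κ(M) and arbitrary in coordinates in κ(M). -/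
open Finset

variable {P : Type*} [Fintype P] [DecidableEq P] [PartialOrder P]

/-- The cubical colouring induced by a colouring `κ` of the crossing complex:
a downset `I` is sent to the vector whose `j`-th coordinate is the parity of
the number of elements of `I` of colour `j`. -/
def cubeColour {r : ℕ} (κ : P → Fin r) (S : Finset P) : Fin r → ZMod 2 :=
  fun j => ((S.filter (fun y => κ y = j)).card : ZMod 2)

private lemma zmod2_add_self (x : ZMod 2) : x + x = 0 := by revert x; decide

private lemma zmod2_ne_iff (a b : ZMod 2) (h : a ≠ b) : a = b + 1 := by revert h; revert a b; decide

set_option linter.unusedSectionVars false in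
private lemma filt_card {r : ℕ} (κ : P → Fin r) (N : Finset P)
    (hinj : ∀ a ∈ N, ∀ b ∈ N, κ a = κ b → a = b) (j : Fin r) :
    (N.filter (fun y => κ y = j)).card = if j ∈ N.image κ then 1 else 0 := by
  by_cases h : j ∈ N.image κ
  · obtain ⟨n, hn, rfl⟩ := Finset.mem_image.mp h
    rw [if_pos h, Finset.card_eq_one]
    refine ⟨n, ?_⟩
    ext x
    simp only [Finset.mem_filter, Finset.mem_singleton]
    constructor
    · rintro ⟨hx, hxk⟩; exact hinj x hx n hn hxk
    · rintro rfl; exact ⟨hn, rfl⟩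
  · rw [if_neg h, Finset.card_eq_zero, Finset.filter_eq_empty_iff]
    intro x hx hxk
    exact h (Finset.mem_image.mpr ⟨x, hx, hxk⟩)

set_option linter.unusedSectionVars false in
private lemma cube_diff {r : ℕ} (κ : P → Fin r) (I N : Finset P) (hNI : N ⊆ I)
    (hinj : ∀ a ∈ N, ∀ b ∈ N, κ a = κ b → a = b) (j : Fin r) :
    cubeColour κ (I \ N) j
      = cubeColour κ I j + (if j ∈ N.image κ then 1 else 0) := by
  unfold cubeColour
  have hu : (I \ N) ∪ N = I := Finset.sdiff_union_of_subset hNI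
  have hdisj : Disjoint ((I \ N).filter (fun y => κ y = j))
      (N.filter (fun y => κ y = j)) :=
    Finset.disjoint_filter_filter (Finset.sdiff_disjoint)
  have hcard : (I.filter (fun y => κ y = j)).card
      = ((I \ N).filter (fun y => κ y = j)).card
        + (N.filter (fun y => κ y = j)).card := by
    conv_lhs => rw [← hu]
    rw [Finset.filter_union, Finset.card_union_of_disjoint hdisj]
  rw [hcard, filt_card κ N hinj j]
  push_cast
  by_cases h : j ∈ N.image κ
  · rw [if_pos h] at *
    have h11 : (1 : ZMod 2) + 1 = 0 := by decide
    rw [add_assoc, h11, add_zero]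
  · rw [if_neg h] at *
    rw [add_zero, add_zero]

/-- If `κ` is a proper `r`-colouring of the crossing complex `Δ_P` (distinct
colours on consistent incomparable pairs), then on each face `C(I,M)` of
`⊞_P` the induced cubical colouring is injective on the vertex set
`{I \ N : N ⊆ M}`, and its image is the face of the cube `{0,1}^r` whose
coordinates in `κ(M)` vary and whose other coordinates agree with the colour
of `I \ M`. -/
theorem colouring_cubical_from_crossing (incons : P → P → Prop)
    (hirr : ∀ a, ¬ incons a a)
    (hsymm : ∀ a b, incons a b → incons b a)
    (hup : ∀ a b a' b', incons a b → a ≤ a' → b ≤ b' → incons a' b')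
    (r : ℕ) (κ : P → Fin r)
    (hκ : ∀ a b : P, a ≠ b → ¬ incons a b → ¬ a ≤ b → ¬ b ≤ a → κ a ≠ κ b)
    (I M : Finset P) (hface : IsFace incons I M) :
    (∀ N ⊆ M, ∀ N' ⊆ M,
        cubeColour κ (I \ N) = cubeColour κ (I \ N') → I \ N = I \ N') ∧
    ({w : Fin r → ZMod 2 | ∃ N ⊆ M, w = cubeColour κ (I \ N)} =
      {w : Fin r → ZMod 2 | ∀ j : Fin r,
        j ∉ M.image κ → w j = cubeColour κ (I \ M) j}) := by
  obtain ⟨hI, hcons, hM⟩ := hface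
  have hMmax : ∀ m ∈ M, m ∈ I ∧ ∀ y ∈ I, ¬ m < y := by
    intro m hm
    have := hM hm
    simp only [maxElems, Finset.mem_filter] at this
    exact this
  have hMI : M ⊆ I := fun m hm => (hMmax m hm).1
  have hinjM : ∀ a ∈ M, ∀ b ∈ M, κ a = κ b → a = b := by
    intro a ha b hb hab
    by_contra hne
    have hnc : ¬ incons a b := hcons a (hMI ha) b (hMI hb)
    have h1 : ¬ a ≤ b := fun hle => (hMmax a ha).2 b (hMI hb) (lt_of_le_of_ne hle hne)
    have h2 : ¬ b ≤ a := fun hle => (hMmax b hb).2 a (hMI ha) (lt_of_le_of_ne hle (Ne.symm hne))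
    exact hκ a b hne hnc h1 h2 hab
  have hinjN : ∀ N ⊆ M, ∀ a ∈ N, ∀ b ∈ N, κ a = κ b → a = b :=
    fun N hN a ha b hb => hinjM a (hN ha) b (hN hb)
  constructor
  · intro N hN N' hN' heq
    have hNN' : N = N' := by
      ext m
      have key : ∀ j : Fin r, (j ∈ N.image κ) ↔ (j ∈ N'.image κ) := by
        intro j
        have h1 := cube_diff κ I N (hN.trans hMI) (hinjN N hN) j
        have h2 := cube_diff κ I N' (hN'.trans hMI) (hinjN N' hN') j
        have : (if j ∈ N.image κ then (1 : ZMod 2) else 0)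
            = (if j ∈ N'.image κ then 1 else 0) := by
          have := congrFun heq j
          rw [h1, h2] at this
          exact add_left_cancel this
        by_cases ha : j ∈ N.image κ <;> by_cases hb : j ∈ N'.image κ <;>
          simp [ha, hb] at this ⊢
      constructor
      · intro hm
        have : κ m ∈ N'.image κ := (key (κ m)).mp (Finset.mem_image_of_mem κ hm)
        obtain ⟨m', hm', hmm⟩ := Finset.mem_image.mp this
        rwa [hinjM m' (hN' hm') m (hN hm) hmm] at hm'
      · intro hm
        have : κ m ∈ N.image κ := (key (κ m)).mpr (Finset.mem_image_of_mem κ hm)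
        obtain ⟨m', hm', hmm⟩ := Finset.mem_image.mp this
        rwa [hinjM m' (hN hm') m (hN' hm) hmm] at hm'
    rw [hNN']
  · ext w
    simp only [Set.mem_setOf_eq]
    constructor
    · rintro ⟨N, hN, rfl⟩ j hj
      have hjN : j ∉ N.image κ := fun h => hj (Finset.image_subset_image hN h)
      rw [cube_diff κ I N (hN.trans hMI) (hinjN N hN) j,
        cube_diff κ I M hMI hinjM j, if_neg hjN, if_neg hj]
    · intro hw
      classical
      set N : Finset P := M.filter (fun m => w (κ m) ≠ cubeColour κ I (κ m)) with hNdef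
      have hN : N ⊆ M := Finset.filter_subset _ _
      refine ⟨N, hN, ?_⟩
      funext j
      rw [cube_diff κ I N (hN.trans hMI) (hinjN N hN) j]
      by_cases hj : j ∈ M.image κ
      · obtain ⟨m, hm, rfl⟩ := Finset.mem_image.mp hj
        have hmem : κ m ∈ N.image κ ↔ w (κ m) ≠ cubeColour κ I (κ m) := by
          constructor
          · intro h
            obtain ⟨m', hm', hmm⟩ := Finset.mem_image.mp h
            rw [hNdef, Finset.mem_filter] at hm'
            exact hmm ▸ hm'.2
          · intro h
            exact Finset.mem_image_of_mem κ (by rw [hNdef, Finset.mem_filter]; exact ⟨hm, h⟩)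
        by_cases hne : w (κ m) = cubeColour κ I (κ m)
        · rw [if_neg (fun h => (hmem.mp h) hne), add_zero, hne]
        · rw [if_pos (hmem.mpr hne)]
          exact zmod2_ne_iff _ _ hne
      · have hjN : j ∉ N.image κ := fun h => hj (Finset.image_subset_image hN h)
        rw [if_neg hjN, add_zero, hw j hj,
          cube_diff κ I M hMI hinjM j, if_neg hj, add_zero]
end
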